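/- arXiv:2007.06881 — 3 statements merged into one kernel-verified Lean document; each statement's English description precedes it below -/
import Mathlib

section
/- Associativity of middle product with polynomial multiplication: for integers d, k, n > 0 and polynomials r ∈ R^{<k+1}[x], a ∈ R^{<n}[x], s ∈ R^{<n+d+k-1}[x] over a commutative ring R, it holds that r ⊙_d (a ⊙_{d+k} s) = (r · a) ⊙_d s. -/
open Polynomial

/-- Middle product: the polynomial with coefficients of `a*b` of degrees `k,...,k+d-1`,
i.e. `⌊(a·b mod x^{k+d}) / x^k⌋`. -/
noncomputable def middleProduct (R : Type*) [CommRing R] (d k : ℕ) (a b : Polynomial R) :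
    Polynomial R :=
  ∑ i ∈ Finset.range d, Polynomial.C ((a * b).coeff (k + i)) * Polynomial.X ^ i

lemma coeff_middleProduct (R : Type*) [CommRing R] (d k : ℕ) (a b : Polynomial R) (j : ℕ) :
    (middleProduct R d k a b).coeff j = if j < d then (a * b).coeff (k + j) else 0 := by
  unfold middleProduct
  rw [Polynomial.finset_sum_coeff]
  simp only [Polynomial.coeff_C_mul, Polynomial.coeff_X_pow, mul_ite, mul_one, mul_zero]
  rw [Finset.sum_ite_eq (Finset.range d) j (fun i => (a * b).coeff (k + i))]
  simp [Finset.mem_range]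

/-- `r ⊙_d (a ⊙_{d+k} s) = (r·a) ⊙_d s` for `deg r < k+1`, `deg a < n`,
`deg s < n+d+k-1`. The inner middle product `a ⊙_{d+k} s` has shift parameter `n-1`,
the outer one has shift `k`, and `(r·a) ⊙_d s` has shift `n+k-1`. -/
theorem middleProduct_assoc (R : Type*) [CommRing R] (d k n : ℕ)
    (hd : 0 < d) (hk : 0 < k) (hn : 0 < n)
    (r a s : Polynomial R)
    (hr : r.degree < ((k + 1 : ℕ) : WithBot ℕ))
    (ha : a.degree < (n : ℕ))
    (hs : s.degree < ((n + d + k - 1 : ℕ) : WithBot ℕ)) :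
    middleProduct R d k r (middleProduct R (d + k) (n - 1) a s)
      = middleProduct R d (n + k - 1) (r * a) s := by
  have hrc : ∀ u : ℕ, k < u → r.coeff u = 0 := by
    intro u hu
    apply Polynomial.coeff_eq_zero_of_degree_lt
    exact lt_of_lt_of_le hr (by exact_mod_cast Nat.succ_le_of_lt hu)
  ext j
  rw [coeff_middleProduct, coeff_middleProduct]
  by_cases hj : j < d
  · simp only [if_pos hj]
    rw [mul_assoc, Polynomial.coeff_mul, Polynomial.coeff_mul,
      Finset.Nat.sum_antidiagonal_eq_sum_range_succ_mk,
      Finset.Nat.sum_antidiagonal_eq_sum_range_succ_mk]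
    have h1 : ∑ u ∈ Finset.range (k + j + 1),
        r.coeff u * (middleProduct R (d + k) (n - 1) a s).coeff (k + j - u)
        = ∑ u ∈ Finset.range (k + 1),
        r.coeff u * (middleProduct R (d + k) (n - 1) a s).coeff (k + j - u) := by
      refine (Finset.sum_subset (by intro u hu; simp at hu ⊢; omega) ?_).symm
      intro u hu hu'
      simp only [Finset.mem_range] at hu hu'
      rw [hrc u (by omega), zero_mul]
    have h2 : ∑ u ∈ Finset.range (n + k - 1 + j + 1),
        r.coeff u * (a * s).coeff (n + k - 1 + j - u)
        = ∑ u ∈ Finset.range (k + 1),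
        r.coeff u * (a * s).coeff (n + k - 1 + j - u) := by
      refine (Finset.sum_subset (by intro u hu; simp at hu ⊢; omega) ?_).symm
      intro u hu hu'
      simp only [Finset.mem_range] at hu hu'
      rw [hrc u (by omega), zero_mul]
    rw [h1, h2]
    apply Finset.sum_congr rfl
    intro u hu
    simp only [Finset.mem_range] at hu
    rw [coeff_middleProduct, if_pos (by omega)]
    have h3 : n - 1 + (k + j - u) = n + k - 1 + j - u := by omega
    rw [h3]
  · simp [hj]
end

section
/- Correctness of decryption under smallness condition: with the notation of the decryption identity, if the polynomial μ + 2(e₀ − Σᵢ rᵢ ⊙_{k+2} eᵢ) has all coefficients of absolute value strictly less than q/2 (when coefficients are taken as integers), and μ has coefficients in {0,1}, then reducing CT₀ − Σᵢ rᵢ ⊙_{k+2} ctᵢ first modulo q (to the centered interval (−q/2, q/2]) and then modulo 2 recovers μ. -/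
open Polynomial

lemma bmod_eq_self_of_two_mul_abs_lt {y : ℤ} {q : ℕ} (hq : 0 < q) (h : 2 * |y| < q) :
    Int.bmod y q = y := by
  have hd := Int.dvd_bmod_sub_self (x := y) (m := q)
  have h1 := Int.le_bmod (x := y) hq
  have h2 := Int.bmod_lt (x := y) hq
  have hy := abs_lt.mp (show |2 * y| < (q : ℤ) by rw [abs_mul]; simpa using h)
  have h3 : |Int.bmod y q - y| < (q : ℤ) := by rw [abs_lt]; omega
  have := Int.eq_zero_of_abs_lt_dvd hd h3
  omega

/-- Correctness of decryption: if `CT₀ − Σᵢ rᵢ ⊙_{k+2} ctᵢ ≡ μ + 2·E (mod q)`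
coefficientwise (with `E = e₀ − Σᵢ rᵢ ⊙_{k+2} eᵢ`), all coefficients of `μ + 2·E`
are of absolute value `< q/2`, `μ` has `{0,1}` coefficients and `q` is an odd prime,
then centered reduction mod `q` followed by reduction mod `2` recovers `μ`. -/
theorem decryption_correct (q : ℕ) (hq : Nat.Prime q) (hodd : Odd q)
    (N k : ℕ) (r e ct : Fin N → Polynomial ℤ) (κ : Fin N → ℕ)
    (CT₀ e₀ μ : Polynomial ℤ)
    (hcong : ∀ i : ℕ,
      (CT₀ - ∑ j, middleProduct ℤ (k + 2) (κ j) (r j) (ct j)).coeff i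
        ≡ (μ + 2 * (e₀ - ∑ j, middleProduct ℤ (k + 2) (κ j) (r j) (e j))).coeff i
          [ZMOD (q : ℤ)])
    (hbound : ∀ i : ℕ,
      2 * |(μ + 2 * (e₀ - ∑ j, middleProduct ℤ (k + 2) (κ j) (r j) (e j))).coeff i|
        < (q : ℤ))
    (hμ : ∀ i : ℕ, μ.coeff i = 0 ∨ μ.coeff i = 1) :
    ∀ i : ℕ,
      (Int.bmod ((CT₀ - ∑ j, middleProduct ℤ (k + 2) (κ j) (r j) (ct j)).coeff i) q) % 2
        = μ.coeff i := by
  intro i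
  have hqpos : 0 < q := hq.pos
  have hb : Int.bmod ((CT₀ - ∑ j, middleProduct ℤ (k + 2) (κ j) (r j) (ct j)).coeff i) q
      = (μ + 2 * (e₀ - ∑ j, middleProduct ℤ (k + 2) (κ j) (r j) (e j))).coeff i := by
    rw [← Int.emod_bmod _ q, (hcong i : _ % (q:ℤ) = _ % (q:ℤ)), Int.emod_bmod]
    exact bmod_eq_self_of_two_mul_abs_lt hqpos (hbound i)
  rw [hb]
  simp only [Polynomial.coeff_add, Polynomial.coeff_ofNat_mul]
  rw [Int.add_mul_emod_self_left]
  rcases hμ i with h | h <;> simp [h]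
end

section
/- Discrete Gaussian tail bound over Z: for any ε ∈ (0, 1/2), any σ ≥ η_ε(Z) (the smoothing parameter of Z), any center c ∈ ℝ, and any K > 0, a sample x drawn from the discrete Gaussian D_{Z,σ,c} satisfies Pr[|x − c| ≥ K·σ] ≤ 2e^{−πK²} · (1+ε)/(1−ε). -/
open Real

lemma summable_gauss_shift {a : ℝ} (ha : 0 < a) (d : ℝ) :
    Summable (fun n : ℤ => Real.exp (-π * a * ((n : ℝ) + d) ^ 2)) := by
  have h := summable_pow_mul_jacobiTheta₂_term_bound (a * |d|) ha 0
  simp only [pow_zero, one_mul] at h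
  refine Summable.of_nonneg_of_le (fun n => (Real.exp_pos _).le) (fun n => ?_)
    (h.mul_left (Real.exp (π * a * d ^ 2)))
  rw [← Real.exp_add, Real.exp_le_exp, Int.cast_abs]
  have h1 : -(d * (n : ℝ)) ≤ |d| * |(n : ℝ)| := by
    rw [← abs_mul]; exact neg_le_abs _
  have h2 : 0 ≤ |d| * |(n : ℝ)| + d * n := by linarith
  nlinarith [mul_pos pi_pos ha, sq_nonneg (d : ℝ),
    mul_nonneg (mul_pos pi_pos ha).le h2, mul_nonneg (mul_pos pi_pos ha).le (sq_nonneg d)]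

lemma summable_gauss {a : ℝ} (ha : 0 < a) :
    Summable (fun n : ℤ => Real.exp (-π * a * (n : ℝ) ^ 2)) :=
  (summable_gauss_shift ha 0).congr (fun n => by rw [add_zero])

lemma gauss_poisson {σ : ℝ} (hσ : 0 < σ) (d : ℝ) :
    (∑' n : ℤ, Real.exp (-π * ((n : ℝ) - d) ^ 2 / σ ^ 2)) =
      σ * ∑' n : ℤ, Real.exp (-π * σ ^ 2 * (n : ℝ) ^ 2) * Real.cos (2 * π * d * n) := by
  have ha : (0 : ℝ) < σ ^ 2 := by positivity
  have hre : ∀ x y : ℝ, ((x : ℂ) + (y : ℂ) * Complex.I).re = x := fun x y => by simp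
  have him : ∀ x y : ℝ, ((x : ℂ) + (y : ℂ) * Complex.I).im = y := fun x y => by simp
  have hw : ∀ n : ℤ, (-(π : ℂ) * ((σ ^ 2 : ℝ) : ℂ) * (n : ℂ) ^ 2
      + 2 * (π : ℂ) * (Complex.I * (d : ℂ)) * (n : ℂ))
      = ((-π * σ ^ 2 * (n : ℝ) ^ 2 : ℝ) : ℂ) + ((2 * π * d * (n : ℝ) : ℝ) : ℂ) * Complex.I := by
    intro n; push_cast; ring
  have hsummC : Summable (fun n : ℤ => Complex.exp (-(π : ℂ) * ((σ ^ 2 : ℝ) : ℂ) * (n : ℂ) ^ 2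
      + 2 * (π : ℂ) * (Complex.I * (d : ℂ)) * (n : ℂ))) := by
    rw [← summable_norm_iff]
    refine (summable_gauss ha).congr (fun n => ?_)
    rw [hw n, Complex.norm_exp, hre]
  have key := Complex.tsum_exp_neg_quadratic
    (a := ((σ ^ 2 : ℝ) : ℂ)) (by rw [Complex.ofReal_re]; exact ha) (Complex.I * (d : ℂ))
  have ha2 : ((σ ^ 2 : ℝ) : ℂ) ^ (1 / 2 : ℂ) = (σ : ℂ) := by
    rw [show ((1 : ℂ) / 2) = ((1 / 2 : ℝ) : ℂ) by norm_num, ← Complex.ofReal_cpow ha.le]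
    norm_num [← Real.sqrt_eq_rpow, Real.sqrt_sq hσ.le]
  have hC : ((∑' n : ℤ, Real.exp (-π * ((n : ℝ) - d) ^ 2 / σ ^ 2) : ℝ) : ℂ)
      = ∑' n : ℤ, Complex.exp (-(π : ℂ) / ((σ ^ 2 : ℝ) : ℂ)
          * ((n : ℂ) + Complex.I * (Complex.I * (d : ℂ))) ^ 2) := by
    rw [Complex.ofReal_tsum]
    refine tsum_congr (fun n => ?_)
    rw [Complex.ofReal_exp]
    congr 1
    rw [show (Complex.I * (Complex.I * (d : ℂ))) = -(d : ℂ) by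
      rw [← mul_assoc, Complex.I_mul_I]; ring]
    push_cast
    ring
  rw [ha2] at key
  have hmain : ((∑' n : ℤ, Real.exp (-π * ((n : ℝ) - d) ^ 2 / σ ^ 2) : ℝ) : ℂ)
      = (σ : ℂ) * ∑' n : ℤ, Complex.exp (-(π : ℂ) * ((σ ^ 2 : ℝ) : ℂ) * (n : ℂ) ^ 2
          + 2 * (π : ℂ) * (Complex.I * (d : ℂ)) * (n : ℂ)) := by
    rw [hC, key, ← mul_assoc (σ : ℂ), mul_one_div, div_self (Complex.ofReal_ne_zero.2 hσ.ne'), one_mul]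
  have hfin := congrArg Complex.re hmain
  rw [Complex.ofReal_re, Complex.re_ofReal_mul, Complex.re_tsum hsummC] at hfin
  rw [hfin]
  congr 1
  refine tsum_congr (fun n => ?_)
  rw [hw n, Complex.exp_re, hre, him]

lemma gauss_sum_bounds {σ : ℝ} (hσ : 0 < σ) (d : ℝ) :
    σ * (1 - (∑' n : ℤ, if n = 0 then 0 else Real.exp (-π * σ ^ 2 * (n : ℝ) ^ 2)))
      ≤ (∑' n : ℤ, Real.exp (-π * ((n : ℝ) - d) ^ 2 / σ ^ 2)) ∧
    (∑' n : ℤ, Real.exp (-π * ((n : ℝ) - d) ^ 2 / σ ^ 2))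
      ≤ σ * (1 + (∑' n : ℤ, if n = 0 then 0 else Real.exp (-π * σ ^ 2 * (n : ℝ) ^ 2))) := by
  have ha : (0 : ℝ) < σ ^ 2 := by positivity
  set g : ℤ → ℝ := fun n => Real.exp (-π * σ ^ 2 * (n : ℝ) ^ 2) * Real.cos (2 * π * d * n)
    with hg_def
  have hgs : Summable g := by
    refine Summable.of_norm_bounded (summable_gauss ha) (fun n => ?_)
    rw [hg_def, Real.norm_eq_abs, abs_mul, Real.abs_exp]
    calc Real.exp (-π * σ ^ 2 * (n : ℝ) ^ 2) * |Real.cos (2 * π * d * n)|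
        ≤ Real.exp (-π * σ ^ 2 * (n : ℝ) ^ 2) * 1 :=
          mul_le_mul_of_nonneg_left (abs_cos_le_one _) (Real.exp_pos _).le
      _ = _ := mul_one _
  have hhs : Summable (fun n : ℤ => if n = 0 then 0 else Real.exp (-π * σ ^ 2 * (n : ℝ) ^ 2)) := by
    refine Summable.of_nonneg_of_le (fun n => ?_) (fun n => ?_) (summable_gauss ha)
    · split_ifs
      · exact le_rfl
      · exact (Real.exp_pos _).le
    · split_ifs
      · exact (Real.exp_pos _).le
      · exact le_rfl
  have hsplit := Summable.tsum_eq_add_tsum_ite hgs 0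
  have hg0 : g 0 = 1 := by simp [hg_def]
  set T := ∑' n : ℤ, (if n = 0 then 0 else g n) with hT_def
  have habs : |T| ≤ ∑' n : ℤ, (if n = 0 then 0 else Real.exp (-π * σ ^ 2 * (n : ℝ) ^ 2)) := by
    have hsum2 : Summable (fun n : ℤ => ‖if n = 0 then 0 else g n‖) := by
      refine Summable.of_nonneg_of_le (fun n => norm_nonneg _) (fun n => ?_) hhs
      rw [Real.norm_eq_abs]
      split_ifs with h
      · simp
      · rw [hg_def, abs_mul, Real.abs_exp]
        calc Real.exp (-π * σ ^ 2 * (n : ℝ) ^ 2) * |Real.cos (2 * π * d * n)|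
            ≤ Real.exp (-π * σ ^ 2 * (n : ℝ) ^ 2) * 1 :=
              mul_le_mul_of_nonneg_left (abs_cos_le_one _) (Real.exp_pos _).le
          _ = _ := mul_one _
    calc |T| ≤ ∑' n : ℤ, ‖if n = 0 then 0 else g n‖ := by
          rw [hT_def, ← Real.norm_eq_abs]
          exact norm_tsum_le_tsum_norm hsum2
      _ ≤ _ := by
          refine Summable.tsum_le_tsum (fun n => ?_) hsum2 hhs
          rw [Real.norm_eq_abs]
          split_ifs with h
          · simp
          · rw [hg_def, abs_mul, Real.abs_exp]
            calc Real.exp (-π * σ ^ 2 * (n : ℝ) ^ 2) * |Real.cos (2 * π * d * n)|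
                ≤ Real.exp (-π * σ ^ 2 * (n : ℝ) ^ 2) * 1 :=
                  mul_le_mul_of_nonneg_left (abs_cos_le_one _) (Real.exp_pos _).le
              _ = _ := mul_one _
  rw [gauss_poisson hσ d, hsplit, hg0]
  have h1 := abs_le.mp habs
  constructor
  · apply mul_le_mul_of_nonneg_left _ hσ.le
    linarith [h1.1]
  · apply mul_le_mul_of_nonneg_left _ hσ.le
    linarith [h1.2]

lemma tail_pointwise {σ c K : ℝ} (hσ : 0 < σ) (hK : 0 < K) (n : ℤ) :
    (if K * σ ≤ |(n : ℝ) - c| then Real.exp (-π * ((n : ℝ) - c) ^ 2 / σ ^ 2) else 0)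
      ≤ Real.exp (-π * K ^ 2) * (Real.exp (-π * ((n : ℝ) - (c + K * σ)) ^ 2 / σ ^ 2)
        + Real.exp (-π * ((n : ℝ) - (c - K * σ)) ^ 2 / σ ^ 2)) := by
  have hσ2 : (0 : ℝ) < σ ^ 2 := by positivity
  split_ifs with h
  · set u : ℝ := (n : ℝ) - c with hu_def
    rcases le_abs.mp h with hu | hu
    · have h1 : Real.exp (-π * u ^ 2 / σ ^ 2)
          ≤ Real.exp (-π * K ^ 2) * Real.exp (-π * ((n : ℝ) - (c + K * σ)) ^ 2 / σ ^ 2) := by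
        rw [← Real.exp_add, Real.exp_le_exp,
          show (n : ℝ) - (c + K * σ) = u - K * σ by rw [hu_def]; ring, ← sub_nonneg,
          show -π * K ^ 2 + -π * (u - K * σ) ^ 2 / σ ^ 2 - -π * u ^ 2 / σ ^ 2
            = 2 * π * K * (u - K * σ) / σ by field_simp; ring]
        apply div_nonneg _ hσ.le
        have : (0:ℝ) ≤ u - K * σ := by linarith
        positivity
      have h2 : (0:ℝ) ≤ Real.exp (-π * K ^ 2) * Real.exp (-π * ((n : ℝ) - (c - K * σ)) ^ 2 / σ ^ 2) :=
        by positivity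
      calc Real.exp (-π * u ^ 2 / σ ^ 2)
          ≤ _ := h1
        _ ≤ _ := by rw [mul_add]; linarith
    · have h1 : Real.exp (-π * u ^ 2 / σ ^ 2)
          ≤ Real.exp (-π * K ^ 2) * Real.exp (-π * ((n : ℝ) - (c - K * σ)) ^ 2 / σ ^ 2) := by
        rw [← Real.exp_add, Real.exp_le_exp,
          show (n : ℝ) - (c - K * σ) = u + K * σ by rw [hu_def]; ring, ← sub_nonneg,
          show -π * K ^ 2 + -π * (u + K * σ) ^ 2 / σ ^ 2 - -π * u ^ 2 / σ ^ 2
            = 2 * π * K * (-u - K * σ) / σ by field_simp; ring]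
        apply div_nonneg _ hσ.le
        have : (0:ℝ) ≤ -u - K * σ := by linarith
        positivity
      have h2 : (0:ℝ) ≤ Real.exp (-π * K ^ 2) * Real.exp (-π * ((n : ℝ) - (c + K * σ)) ^ 2 / σ ^ 2) :=
        by positivity
      calc Real.exp (-π * u ^ 2 / σ ^ 2)
          ≤ _ := h1
        _ ≤ _ := by rw [mul_add]; linarith
  · positivity

/-- Discrete Gaussian tail bound (GPV Lemma 2.9): for `ε ∈ (0,1/2)`, `σ ≥ η_ε(ℤ)`
(expressed by the smoothing condition `ρ_{1/σ}(ℤ∖{0}) ≤ ε`), center `c ∈ ℝ` and `K > 0`,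
the mass that `D_{ℤ,σ,c}` puts on `{x : |x−c| ≥ K·σ}` is at most
`2·e^{−πK²}·(1+ε)/(1−ε)`. -/
theorem discrete_gaussian_tail (ε σ c K : ℝ)
    (hε₀ : 0 < ε) (hε : ε < 1 / 2) (hσ : 0 < σ) (hK : 0 < K)
    (hsmooth : (∑' x : ℤ, if x = 0 then 0 else Real.exp (-π * σ ^ 2 * (x : ℝ) ^ 2)) ≤ ε) :
    (∑' x : ℤ, if K * σ ≤ |(x : ℝ) - c|
        then Real.exp (-π * ((x : ℝ) - c) ^ 2 / σ ^ 2) else 0)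
      / (∑' x : ℤ, Real.exp (-π * ((x : ℝ) - c) ^ 2 / σ ^ 2))
      ≤ 2 * Real.exp (-π * K ^ 2) * (1 + ε) / (1 - ε) := by
  have hσ2 : (0 : ℝ) < σ ^ 2 := by positivity
  set ε' : ℝ := ∑' x : ℤ, if x = 0 then 0 else Real.exp (-π * σ ^ 2 * (x : ℝ) ^ 2) with hε'_def
  have hε'0 : 0 ≤ ε' := tsum_nonneg (fun n => by split_ifs; exacts [le_rfl, (Real.exp_pos _).le])
  -- summability of shifted full gaussians
  have hsummd : ∀ d : ℝ, Summable (fun n : ℤ => Real.exp (-π * ((n : ℝ) - d) ^ 2 / σ ^ 2)) := by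
    intro d
    refine (summable_gauss_shift (show (0:ℝ) < 1 / σ ^ 2 by positivity) (-d)).congr (fun n => ?_)
    congr 1
    ring
  -- denominator bound
  have hD := (gauss_sum_bounds hσ c).1
  have hDge : σ * (1 - ε) ≤ ∑' x : ℤ, Real.exp (-π * ((x : ℝ) - c) ^ 2 / σ ^ 2) := by
    refine le_trans ?_ hD
    have : 1 - ε ≤ 1 - ε' := by linarith
    nlinarith
  have hDpos : (0:ℝ) < σ * (1 - ε) := by nlinarith
  -- numerator bound
  have hNs : Summable (fun n : ℤ => if K * σ ≤ |(n : ℝ) - c|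
      then Real.exp (-π * ((n : ℝ) - c) ^ 2 / σ ^ 2) else 0) := by
    refine Summable.of_nonneg_of_le (fun n => ?_) (fun n => ?_) (hsummd c)
    · split_ifs; exacts [(Real.exp_pos _).le, le_rfl]
    · split_ifs; exacts [le_rfl, (Real.exp_pos _).le]
  have hN : (∑' x : ℤ, if K * σ ≤ |(x : ℝ) - c|
      then Real.exp (-π * ((x : ℝ) - c) ^ 2 / σ ^ 2) else 0)
      ≤ 2 * Real.exp (-π * K ^ 2) * (σ * (1 + ε)) := by
    have step1 : (∑' x : ℤ, if K * σ ≤ |(x : ℝ) - c|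
        then Real.exp (-π * ((x : ℝ) - c) ^ 2 / σ ^ 2) else 0)
        ≤ ∑' x : ℤ, Real.exp (-π * K ^ 2) * (Real.exp (-π * ((x : ℝ) - (c + K * σ)) ^ 2 / σ ^ 2)
          + Real.exp (-π * ((x : ℝ) - (c - K * σ)) ^ 2 / σ ^ 2)) :=
      Summable.tsum_le_tsum (fun n => tail_pointwise hσ hK n) hNs
        (((hsummd (c + K * σ)).add (hsummd (c - K * σ))).mul_left _)
    have step2 : (∑' x : ℤ, Real.exp (-π * K ^ 2)
          * (Real.exp (-π * ((x : ℝ) - (c + K * σ)) ^ 2 / σ ^ 2)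
            + Real.exp (-π * ((x : ℝ) - (c - K * σ)) ^ 2 / σ ^ 2)))
        = Real.exp (-π * K ^ 2) * ((∑' x : ℤ, Real.exp (-π * ((x : ℝ) - (c + K * σ)) ^ 2 / σ ^ 2))
          + ∑' x : ℤ, Real.exp (-π * ((x : ℝ) - (c - K * σ)) ^ 2 / σ ^ 2)) := by
      rw [tsum_mul_left, Summable.tsum_add (hsummd (c + K * σ)) (hsummd (c - K * σ))]
    have b1 := (gauss_sum_bounds hσ (c + K * σ)).2
    have b2 := (gauss_sum_bounds hσ (c - K * σ)).2
    have hσε : σ * (1 + ε') ≤ σ * (1 + ε) := by nlinarith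
    calc _ ≤ _ := step1
      _ = _ := step2
      _ ≤ Real.exp (-π * K ^ 2) * (σ * (1 + ε) + σ * (1 + ε)) := by
          have := Real.exp_pos (-π * K ^ 2)
          apply mul_le_mul_of_nonneg_left _ this.le
          have := le_trans b1 hσε
          have := le_trans b2 hσε
          linarith
      _ = 2 * Real.exp (-π * K ^ 2) * (σ * (1 + ε)) := by ring
  have hNnn : 0 ≤ 2 * Real.exp (-π * K ^ 2) * (σ * (1 + ε)) := by positivity
  calc (∑' x : ℤ, if K * σ ≤ |(x : ℝ) - c|
        then Real.exp (-π * ((x : ℝ) - c) ^ 2 / σ ^ 2) else 0)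
      / (∑' x : ℤ, Real.exp (-π * ((x : ℝ) - c) ^ 2 / σ ^ 2))
      ≤ 2 * Real.exp (-π * K ^ 2) * (σ * (1 + ε)) / (σ * (1 - ε)) :=
        div_le_div₀ hNnn hN hDpos hDge
    _ = 2 * Real.exp (-π * K ^ 2) * (1 + ε) / (1 - ε) := by
        have h1 : (1:ℝ) - ε ≠ 0 := by linarith
        field_simp
end
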